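/- Every finitely generated subgroup of GL(n, ℂ) is residually finite. -/

import Mathlib

/-- `ℤ` is a Jacobson ring. -/
theorem malcev_aux_isJacobson_int : IsJacobsonRing ℤ := by
  rw [isJacobsonRing_iff_prime_eq]
  intro P hP
  rcases eq_or_ne P ⊥ with rfl | hne
  · refine le_antisymm (fun x hx => ?_) Ideal.le_jacobson
    rw [Ideal.mem_jacobson_bot] at hx
    have h1 := hx 1
    have h2 := hx (-1)
    rw [Int.isUnit_iff] at h1 h2
    simp only [Ideal.mem_bot]
    omega
  · haveI := IsPrime.to_maximal_ideal hne
    exact Ideal.jacobson_eq_self_of_isMaximal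

attribute [local instance] malcev_aux_isJacobson_int

/-- A field which is a finitely generated algebra over a finitely generated
`ℤ`-algebra is finite. -/
theorem malcev_aux_finite_residue (k : Type*) [Field k] (alg : Algebra ℤ k)
    (h : @Algebra.FiniteType ℤ k _ _ alg) : Finite k := by
  obtain rfl := Subsingleton.elim alg (Ring.toIntAlgebra k)
  haveI : Algebra.FiniteType ℤ k := h
  haveI : Module.Finite ℤ k := finite_of_finite_type_of_isJacobsonRing ℤ k
  haveI : Algebra.IsIntegral ℤ k := Algebra.IsIntegral.of_finite ℤ k
  haveI : (⊥ : Ideal k).IsMaximal := Ideal.bot_isMaximal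
  have hJmax : (RingHom.ker (algebraMap ℤ k)).IsMaximal := by
    have := Ideal.isMaximal_comap_of_isIntegral_of_isMaximal (R := ℤ) (S := k) ⊥
    rwa [← RingHom.ker_eq_comap_bot] at this
  obtain ⟨q, hq⟩ := Submodule.IsPrincipal.principal (RingHom.ker (algebraMap ℤ k))
  have hq0 : q ≠ 0 := by
    rintro rfl
    rw [show Submodule.span ℤ ({0} : Set ℤ) = ⊥ by simp] at hq
    rw [hq] at hJmax
    have h2 : (Ideal.span {(2 : ℤ)}) = ⊤ :=
      hJmax.1.2 _ (bot_lt_iff_ne_bot.2 (by simp [Ideal.span_singleton_eq_bot]))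
    have := Ideal.span_singleton_eq_top.1 h2
    rw [Int.isUnit_iff] at this
    omega
  haveI : CharP k q.natAbs := by
    constructor
    intro a
    rw [show ((a : ℕ) : k) = algebraMap ℤ k (a : ℤ) by push_cast; simp,
      ← RingHom.mem_ker, hq]
    show (a : ℤ) ∈ Ideal.span {q} ↔ _
    rw [Ideal.mem_span_singleton, ← Int.natAbs_dvd, Int.natCast_dvd_natCast]
  haveI : NeZero q.natAbs := ⟨Int.natAbs_ne_zero.2 hq0⟩
  letI : Algebra (ZMod q.natAbs) k := ZMod.algebra k q.natAbs
  haveI : IsScalarTower ℤ (ZMod q.natAbs) k :=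
    IsScalarTower.of_algebraMap_eq' (by
      apply RingHom.ext_int)
  haveI : Module.Finite (ZMod q.natAbs) k :=
    Module.Finite.of_restrictScalars_finite ℤ _ _
  exact Module.finite_of_finite (ZMod q.natAbs)

set_option maxHeartbeats 4000000 in
set_option synthInstance.maxHeartbeats 400000 in
/-- Malcev: every finitely generated subgroup of GL(n, ℂ) is residually finite. -/
theorem stmt12 (n : ℕ) (H : Subgroup (Matrix.GeneralLinearGroup (Fin n) ℂ))
    (hfg : Group.FG H) :
    ∀ g : H, g ≠ 1 →
      ∃ (F : Type) (_ : Group F) (_ : Finite F) (φ : H →* F), φ g ≠ 1 := by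
  classical
  intro g hg
  obtain ⟨S, hS⟩ := hfg.out
  -- the set of entries of generators and their inverses
  set E : Finset ℂ :=
      (S ×ˢ (Finset.univ : Finset (Fin n × Fin n))).image
        (fun p => ((p.1 : Matrix.GeneralLinearGroup (Fin n) ℂ) :
          Matrix (Fin n) (Fin n) ℂ) p.2.1 p.2.2) ∪
      (S ×ˢ (Finset.univ : Finset (Fin n × Fin n))).image
        (fun p => (((p.1⁻¹ : H) : Matrix.GeneralLinearGroup (Fin n) ℂ) :
          Matrix (Fin n) (Fin n) ℂ) p.2.1 p.2.2)
        with hE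
  set A : Subalgebra ℤ ℂ := Algebra.adjoin ℤ (E : Set ℂ) with hA
  have key : ∀ h : H,
      (∀ i j, ((h : Matrix.GeneralLinearGroup (Fin n) ℂ) : Matrix (Fin n) (Fin n) ℂ) i j ∈ A) ∧
      (∀ i j, (((h⁻¹ : H) : Matrix.GeneralLinearGroup (Fin n) ℂ) :
        Matrix (Fin n) (Fin n) ℂ) i j ∈ A) := by
    intro h
    have hh : h ∈ Subgroup.closure (S : Set H) := by rw [hS]; trivial
    refine Subgroup.closure_induction ?_ ?_ ?_ ?_ hh
    · intro x hx
      constructor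
      · intro i j
        exact Algebra.subset_adjoin (Finset.mem_coe.2 (Finset.mem_union_left _
          (Finset.mem_image.2 ⟨(x, (i, j)), by simpa using hx, rfl⟩)))
      · intro i j
        exact Algebra.subset_adjoin (Finset.mem_coe.2 (Finset.mem_union_right _
          (Finset.mem_image.2 ⟨(x, (i, j)), by simpa using hx, rfl⟩)))
    · constructor <;> intro i j <;>
      · simp only [inv_one, OneMemClass.coe_one, Units.val_one, Matrix.one_apply]
        split
        · exact one_mem A
        · exact zero_mem A
    · rintro x y hxc hyc ⟨hx1, hx2⟩ ⟨hy1, hy2⟩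
      have e1 : ((↑(x * y) : Matrix.GeneralLinearGroup (Fin n) ℂ) : Matrix (Fin n) (Fin n) ℂ)
          = ((x : Matrix.GeneralLinearGroup (Fin n) ℂ) : Matrix (Fin n) (Fin n) ℂ) *
            ((y : Matrix.GeneralLinearGroup (Fin n) ℂ) : Matrix (Fin n) (Fin n) ℂ) := by
        rw [Subgroup.coe_mul, Units.val_mul]
      have e2 : ((↑((x * y)⁻¹) : Matrix.GeneralLinearGroup (Fin n) ℂ) : Matrix (Fin n) (Fin n) ℂ)
          = ((↑(y⁻¹) : Matrix.GeneralLinearGroup (Fin n) ℂ) : Matrix (Fin n) (Fin n) ℂ) *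
            ((↑(x⁻¹) : Matrix.GeneralLinearGroup (Fin n) ℂ) : Matrix (Fin n) (Fin n) ℂ) := by
        rw [mul_inv_rev, Subgroup.coe_mul, Units.val_mul]
      constructor
      · intro i j
        rw [e1, Matrix.mul_apply]
        exact Subalgebra.sum_mem _ fun k _ => mul_mem (hx1 i k) (hy1 k j)
      · intro i j
        rw [e2, Matrix.mul_apply]
        exact Subalgebra.sum_mem _ fun k _ => mul_mem (hy2 i k) (hx2 k j)
    · rintro x hxc ⟨hx1, hx2⟩
      refine ⟨hx2, ?_⟩
      intro i j
      rw [inv_inv]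
      exact hx1 i j
  -- g ≠ 1 at the matrix level
  have hgval : ((g : Matrix.GeneralLinearGroup (Fin n) ℂ) : Matrix (Fin n) (Fin n) ℂ) ≠ 1 := by
    intro hcon
    exact hg (Subtype.ext (Units.ext hcon))
  obtain ⟨i, j, hij⟩ : ∃ i j,
      ((g : Matrix.GeneralLinearGroup (Fin n) ℂ) : Matrix (Fin n) (Fin n) ℂ) i j
        ≠ (1 : Matrix (Fin n) (Fin n) ℂ) i j := by
    by_contra hcon
    push_neg at hcon
    exact hgval (by ext i j; exact hcon i j)
  -- A is a finitely generated ℤ-algebra, hence Jacobson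
  haveI : Algebra.FiniteType ℤ A :=
    (Subalgebra.fg_iff_finiteType A).1 (by rw [hA]; exact Subalgebra.fg_adjoin_finset E)
  haveI : IsJacobsonRing A := isJacobsonRing_of_finiteType (A := ℤ)
  have honeA : (1 : Matrix (Fin n) (Fin n) ℂ) i j ∈ A := by
    have h1 := (key 1).1 i j
    rwa [show ((↑(1 : H) : Matrix.GeneralLinearGroup (Fin n) ℂ) : Matrix (Fin n) (Fin n) ℂ)
        = 1 by rw [OneMemClass.coe_one, Units.val_one]] at h1
  have hbot : (⊥ : Ideal A).jacobson = ⊥ :=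
    IsJacobsonRing.out' ⊥ Ideal.isRadical_bot_of_noZeroDivisors
  obtain ⟨m, ⟨-, hmmax⟩, hxm⟩ := Ideal.eq_jacobson_iff_notMem.1 hbot
    ((⟨_, (key g).1 i j⟩ : A) - ⟨_, honeA⟩) (by
      simp only [Ideal.mem_bot]
      intro hcon
      apply hij
      have h1 := congrArg Subtype.val hcon
      simpa [sub_eq_zero] using h1)
  haveI := hmmax
  letI : Field (A ⧸ m) := Ideal.Quotient.field m
  haveI : Finite (A ⧸ m) := malcev_aux_finite_residue _ inferInstance
    (Algebra.FiniteType.of_surjective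
      (Ideal.Quotient.mkₐ ℤ m) (Ideal.Quotient.mkₐ_surjective ℤ m))
  -- integral matrix lifts
  set MA : H → Matrix (Fin n) (Fin n) A :=
    fun h => Matrix.of fun i j => (⟨_, (key h).1 i j⟩ : A) with hMA
  set NA : H → Matrix (Fin n) (Fin n) A :=
    fun h => Matrix.of fun i j => (⟨_, (key h).2 i j⟩ : A) with hNA
  set ρ : A →+* ℂ := algebraMap A ℂ with hρ
  have hinj : Function.Injective
      (fun (B : Matrix (Fin n) (Fin n) A) => B.map ρ) := by
    intro B C hBC
    ext i j
    exact congrFun (congrFun hBC i) j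
  have eMA : ∀ h : H, (MA h).map ρ
      = ((h : Matrix.GeneralLinearGroup (Fin n) ℂ) : Matrix (Fin n) (Fin n) ℂ) := fun h => rfl
  have eNA : ∀ h : H, (NA h).map ρ
      = ((↑(h⁻¹) : Matrix.GeneralLinearGroup (Fin n) ℂ) : Matrix (Fin n) (Fin n) ℂ) :=
    fun h => rfl
  have hone : ((1 : Matrix (Fin n) (Fin n) A)).map ρ = 1 :=
    Matrix.map_one _ (map_zero _) (map_one _)
  have hcoe : ∀ h h' : H, ((↑(h * h') : Matrix.GeneralLinearGroup (Fin n) ℂ) :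
      Matrix (Fin n) (Fin n) ℂ)
      = ((h : Matrix.GeneralLinearGroup (Fin n) ℂ) : Matrix (Fin n) (Fin n) ℂ) *
        ((h' : Matrix.GeneralLinearGroup (Fin n) ℂ) : Matrix (Fin n) (Fin n) ℂ) := by
    intro h h'
    rw [Subgroup.coe_mul, Units.val_mul]
  have hcoe1 : ((↑(1 : H) : Matrix.GeneralLinearGroup (Fin n) ℂ) :
      Matrix (Fin n) (Fin n) ℂ) = 1 := by
    rw [OneMemClass.coe_one, Units.val_one]
  have hMN : ∀ h : H, MA h * NA h = 1 := by
    intro h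
    apply hinj
    show (MA h * NA h).map ρ = (1 : Matrix (Fin n) (Fin n) A).map ρ
    rw [Matrix.map_mul, eMA h, eNA h, hone, ← hcoe, mul_inv_cancel, hcoe1]
  have hNM : ∀ h : H, NA h * MA h = 1 := by
    intro h
    apply hinj
    show (NA h * MA h).map ρ = (1 : Matrix (Fin n) (Fin n) A).map ρ
    rw [Matrix.map_mul, eNA h, eMA h, hone, ← hcoe, inv_mul_cancel, hcoe1]
  set uH : H →* (Matrix (Fin n) (Fin n) A)ˣ :=
    { toFun := fun h => ⟨MA h, NA h, hMN h, hNM h⟩,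
      map_one' := by
        apply Units.ext
        show MA 1 = 1
        apply hinj
        show (MA 1).map ρ = (1 : Matrix (Fin n) (Fin n) A).map ρ
        rw [eMA 1, hone, hcoe1]
      map_mul' := by
        intro a b
        apply Units.ext
        show MA (a * b) = MA a * MA b
        apply hinj
        show (MA (a * b)).map ρ = (MA a * MA b).map ρ
        rw [Matrix.map_mul, eMA (a*b), eMA a, eMA b, hcoe] } with huH
  set ψ : Matrix (Fin n) (Fin n) A →* Matrix (Fin n) (Fin n) (A ⧸ m) :=
    ((Ideal.Quotient.mk m).mapMatrix :
      Matrix (Fin n) (Fin n) A →+* Matrix (Fin n) (Fin n) (A ⧸ m)).toMonoidHom with hψ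
  refine ⟨(Matrix (Fin n) (Fin n) (A ⧸ m))ˣ, inferInstance, inferInstance,
    (Units.map ψ).comp uH, ?_⟩
  intro hcon
  apply hxm
  have h1 : (MA g).map (Ideal.Quotient.mk m) = 1 := by
    have h2 := congrArg Units.val hcon
    have h3 : ((uH g : Matrix (Fin n) (Fin n) A)).map (Ideal.Quotient.mk m) = 1 := by
      simpa [hψ, RingHom.mapMatrix_apply] using h2
    exact h3
  have h2 : Ideal.Quotient.mk m (⟨_, (key g).1 i j⟩ : A)
      = Ideal.Quotient.mk m (⟨_, honeA⟩ : A) := by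
    have h3 : Ideal.Quotient.mk m (⟨_, (key g).1 i j⟩ : A)
        = (1 : Matrix (Fin n) (Fin n) (A ⧸ m)) i j := by
      have h6 : (MA g).map (Ideal.Quotient.mk m) i j
          = (1 : Matrix (Fin n) (Fin n) (A ⧸ m)) i j := by rw [h1]
      exact h6
    have h4 : (⟨_, honeA⟩ : A) = if i = j then 1 else 0 := by
      apply Subtype.ext
      show (1 : Matrix (Fin n) (Fin n) ℂ) i j = _
      rw [Matrix.one_apply]
      split <;> simp
    rw [h3, Matrix.one_apply, h4]
    split <;> simp
  exact Ideal.Quotient.eq.1 h2
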